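/- For the Kovalevskaya vector field X = (2γ₃M₂−4γ₂M₃, −2γ₃M₁+4γ₁M₃, 2γ₂M₁−2γ₁M₂, −2M₂M₃, 2M₁M₃−aγ₃, aγ₂) on ℝ⁶ with coordinates (γ₁,γ₂,γ₃,M₁,M₂,M₃) and parameter a ∈ ℝ, the four functions f₁ = γ₁²+γ₂²+γ₃², f₂ = γ₁M₁+γ₂M₂+γ₃M₃, f₃ = M₁²+M₂²+2M₃²+aγ₁, f₄ = (M₁²−M₂²−aγ₁)² + (2M₁M₂−aγ₂)² are first integrals (∑_i X_i ∂f_k/∂x_i = 0 for k = 1,2,3,4 at every point), and the divergence of X vanishes identically: ∑_{i=1}^6 ∂X_i/∂x_i = 0. -/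

import Mathlib

noncomputable section

open scoped BigOperators

/-- Partial derivative of `f` in the `i`-th coordinate direction at `x`. -/
def pd {n : ℕ} (i : Fin n) (f : (Fin n → ℝ) → ℝ) (x : Fin n → ℝ) : ℝ :=
  fderiv ℝ f x (Pi.single i 1)

/-- The Kovalevskaya vector field on `ℝ⁶` with coordinates
`(x₁,…,x₆) = (γ₁,γ₂,γ₃,M₁,M₂,M₃)`. -/
def kovX (a : ℝ) (x : Fin 6 → ℝ) : Fin 6 → ℝ :=
  ![2 * x 2 * x 4 - 4 * x 1 * x 5, -(2 * x 2 * x 3) + 4 * x 0 * x 5,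
    2 * x 1 * x 3 - 2 * x 0 * x 4, -(2 * x 4 * x 5), 2 * x 3 * x 5 - a * x 2,
    a * x 1]

/-- `f₁ = γ₁² + γ₂² + γ₃²`. -/
def kovF₁ (x : Fin 6 → ℝ) : ℝ := x 0 ^ 2 + x 1 ^ 2 + x 2 ^ 2

/-- `f₂ = γ₁M₁ + γ₂M₂ + γ₃M₃`. -/
def kovF₂ (x : Fin 6 → ℝ) : ℝ := x 0 * x 3 + x 1 * x 4 + x 2 * x 5

/-- `f₃ = M₁² + M₂² + 2M₃² + aγ₁`. -/
def kovF₃ (a : ℝ) (x : Fin 6 → ℝ) : ℝ :=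
  x 3 ^ 2 + x 4 ^ 2 + 2 * x 5 ^ 2 + a * x 0

/-- The Kovalevskaya integral `f₄ = (M₁² − M₂² − aγ₁)² + (2M₁M₂ − aγ₂)²`. -/
def kovF₄ (a : ℝ) (x : Fin 6 → ℝ) : ℝ :=
  (x 3 ^ 2 - x 4 ^ 2 - a * x 0) ^ 2 + (2 * x 3 * x 4 - a * x 1) ^ 2

/-- Coordinate functions have the projections as derivatives. -/
lemma kov_hco (j : Fin 6) (x : Fin 6 → ℝ) :
    HasFDerivAt (fun y : Fin 6 → ℝ => y j)
      (ContinuousLinearMap.proj j : (Fin 6 → ℝ) →L[ℝ] ℝ) x := by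
  exact ContinuousLinearMap.hasFDerivAt
    (ContinuousLinearMap.proj (R := ℝ) (φ := fun _ : Fin 6 => ℝ) j)

/-- Derivative of a square. -/
lemma kov_hsq {c : (Fin 6 → ℝ) → ℝ} {c' : (Fin 6 → ℝ) →L[ℝ] ℝ} {x : Fin 6 → ℝ}
    (hc : HasFDerivAt c c' x) :
    HasFDerivAt (fun y => c y ^ 2) (c x • c' + c x • c') x := by
  simpa only [pow_two] using
    (show HasFDerivAt (fun y => c y * c y) (c x • c' + c x • c') x from hc.mul hc)

lemma kovX_val0 (a : ℝ) (y : Fin 6 → ℝ) : kovX a y 0 = 2 * y 2 * y 4 - 4 * y 1 * y 5 := rfl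
lemma kovX_val1 (a : ℝ) (y : Fin 6 → ℝ) : kovX a y 1 = -(2 * y 2 * y 3) + 4 * y 0 * y 5 := rfl
lemma kovX_val2 (a : ℝ) (y : Fin 6 → ℝ) : kovX a y 2 = 2 * y 1 * y 3 - 2 * y 0 * y 4 := rfl
lemma kovX_val3 (a : ℝ) (y : Fin 6 → ℝ) : kovX a y 3 = -(2 * y 4 * y 5) := rfl
lemma kovX_val4 (a : ℝ) (y : Fin 6 → ℝ) : kovX a y 4 = 2 * y 3 * y 5 - a * y 2 := rfl
lemma kovX_val5 (a : ℝ) (y : Fin 6 → ℝ) : kovX a y 5 = a * y 1 := rfl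

/-- In the Kovalevskaya case, `f₁, f₂, f₃, f₄` are first integrals of `X` and the
divergence of `X` vanishes identically. -/
theorem kovalevskaya_first_integrals_and_divergence_free (a : ℝ) (x : Fin 6 → ℝ) :
    (∑ i, kovX a x i * pd i kovF₁ x = 0) ∧
    (∑ i, kovX a x i * pd i kovF₂ x = 0) ∧
    (∑ i, kovX a x i * pd i (kovF₃ a) x = 0) ∧
    (∑ i, kovX a x i * pd i (kovF₄ a) x = 0) ∧
    (∑ i, pd i (fun y => kovX a y i) x = 0) := by
  refine ⟨?_, ?_, ?_, ?_, ?_⟩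
  · -- f₁
    have h : HasFDerivAt kovF₁ _ x :=
      ((kov_hsq (kov_hco 0 x)).add (kov_hsq (kov_hco 1 x))).add (kov_hsq (kov_hco 2 x))
    rw [Fin.sum_univ_six]
    simp only [pd, h.fderiv]
    simp [kovX_val0, kovX_val1, kovX_val2, kovX_val3, kovX_val4, kovX_val5, Pi.single_apply]
    ring
  · -- f₂
    have h : HasFDerivAt kovF₂ _ x :=
      (((kov_hco 0 x).mul (kov_hco 3 x)).add ((kov_hco 1 x).mul (kov_hco 4 x))).add
        ((kov_hco 2 x).mul (kov_hco 5 x))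
    rw [Fin.sum_univ_six]
    simp only [pd, h.fderiv]
    simp [kovX_val0, kovX_val1, kovX_val2, kovX_val3, kovX_val4, kovX_val5, Pi.single_apply]
    ring
  · -- f₃
    have h : HasFDerivAt (kovF₃ a) _ x :=
      (((kov_hsq (kov_hco 3 x)).add (kov_hsq (kov_hco 4 x))).add
        ((kov_hsq (kov_hco 5 x)).const_mul 2)).add ((kov_hco 0 x).const_mul a)
    rw [Fin.sum_univ_six]
    simp only [pd, h.fderiv]
    simp [kovX_val0, kovX_val1, kovX_val2, kovX_val3, kovX_val4, kovX_val5, Pi.single_apply]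
    ring
  · -- f₄
    have hu := ((kov_hsq (kov_hco 3 x)).sub (kov_hsq (kov_hco 4 x))).sub
      ((kov_hco 0 x).const_mul a)
    have hv := (((kov_hco 3 x).const_mul 2).mul (kov_hco 4 x)).sub
      ((kov_hco 1 x).const_mul a)
    have h : HasFDerivAt (kovF₄ a) _ x := (kov_hsq hu).add (kov_hsq hv)
    rw [Fin.sum_univ_six]
    simp only [pd, h.fderiv]
    simp [kovX_val0, kovX_val1, kovX_val2, kovX_val3, kovX_val4, kovX_val5, Pi.single_apply]
    ring
  · -- divergence
    have g0 : HasFDerivAt (fun y => kovX a y 0) _ x :=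
      (((kov_hco 2 x).const_mul 2).mul (kov_hco 4 x)).sub
        (((kov_hco 1 x).const_mul 4).mul (kov_hco 5 x))
    have g1 : HasFDerivAt (fun y => kovX a y 1) _ x :=
      ((((kov_hco 2 x).const_mul 2).mul (kov_hco 3 x)).neg).add
        (((kov_hco 0 x).const_mul 4).mul (kov_hco 5 x))
    have g2 : HasFDerivAt (fun y => kovX a y 2) _ x :=
      (((kov_hco 1 x).const_mul 2).mul (kov_hco 3 x)).sub
        (((kov_hco 0 x).const_mul 2).mul (kov_hco 4 x))
    have g3 : HasFDerivAt (fun y => kovX a y 3) _ x :=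
      ((((kov_hco 4 x).const_mul 2).mul (kov_hco 5 x)).neg)
    have g4 : HasFDerivAt (fun y => kovX a y 4) _ x :=
      ((((kov_hco 3 x).const_mul 2).mul (kov_hco 5 x))).sub ((kov_hco 2 x).const_mul a)
    have g5 : HasFDerivAt (fun y => kovX a y 5) _ x := (kov_hco 1 x).const_mul a
    rw [Fin.sum_univ_six]
    simp only [pd, g0.fderiv, g1.fderiv, g2.fderiv, g3.fderiv, g4.fderiv, g5.fderiv]
    simp [Pi.single_apply]
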